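/- In the generalized Pólya urn setting of Lemma 6 with a ≤ Z_1 ≤ b a.s. for constants 0 < a < b, and B_1, B_2, ... pairwise disjoint measurable subsets of Y, one has E(‖a_{n+1} − μ‖²) ≤ (c_1/n)·P(Y_1 ∈ ∪_k B_k), where ‖a_{n+1} − μ‖ = sup_k |a_{n+1}(B_k) − μ(B_k)|, a_n(B) = P(Y_{n+1} ∈ B|G_n), μ(B) = a.s. lim a_n(B), and c_1 is a constant depending only on a, b, α. -/

import Mathlib

open MeasureTheory Filter Set

/-- The σ-field generated by the first `n` coordinates. -/
noncomputable def cylG (S : Type*) [MeasurableSpace S] (n : ℕ) : MeasurableSpace (ℕ → S) :=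
  MeasurableSpace.comap (fun ω (i : Fin n) => ω i) inferInstance

/-- Empirical frequency of `B` among the first `n` observations. -/
noncomputable def empMeas {S : Type*} (n : ℕ) (B : Set S) (ω : ℕ → S) : ℝ :=
  (n : ℝ)⁻¹ * ∑ i ∈ Finset.range n, B.indicator (fun _ => (1 : ℝ)) (ω i)

/-- The predictive probability `a_n(B) = P(X_{n+1} ∈ B ∣ G_n)` (0-indexed). -/
noncomputable def predProb {S : Type*} [MeasurableSpace S] (P : Measure (ℕ → S))
    (n : ℕ) (B : Set S) : (ℕ → S) → ℝ :=
  P[fun ω => B.indicator (fun _ => (1 : ℝ)) (ω n) | cylG S n]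

/-- The coordinate sequence is conditionally identically distributed under `P`. -/
def CID {S : Type*} [MeasurableSpace S] (P : Measure (ℕ → S)) : Prop :=
  ∀ B : Set S, MeasurableSet B → ∀ n k : ℕ, n < k →
    (P[fun ω => B.indicator (fun _ => (1 : ℝ)) (ω k) | cylG S n])
      =ᵐ[P] P[fun ω => B.indicator (fun _ => (1 : ℝ)) (ω n) | cylG S n]

/-- `W_n(B) = √n (μ_n(B) - μ(B))`, given the limit random measure `μ` (as `μlim`). -/
noncomputable def Wn {S : Type*} (μlim : Set S → (ℕ → S) → ℝ) (n : ℕ) (B : Set S)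
    (ω : ℕ → S) : ℝ :=
  Real.sqrt n * (empMeas n B ω - μlim B ω)

/-- `D` is countably determined: some countable `D₀ ⊆ D` realizes the same sup-distance
between any two probability laws on `S`. -/
def CountablyDetermined {S : Type*} [MeasurableSpace S] (D : Set (Set S)) : Prop :=
  (∀ B ∈ D, MeasurableSet B) ∧
  ∃ D0 ⊆ D, D0.Countable ∧ ∀ ν1 ν2 : Measure S, IsProbabilityMeasure ν1 →
    IsProbabilityMeasure ν2 →
    (⨆ B : D0, |(ν1 B).toReal - (ν2 B).toReal|) = ⨆ B : D, |(ν1 B).toReal - (ν2 B).toReal|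

/-- The predictive probability for the `Y`-component in the Pólya urn setting. -/
noncomputable def predY {𝒴 : Type*} [MeasurableSpace 𝒴] (P : Measure (ℕ → 𝒴 × ℝ))
    (n : ℕ) (B : Set 𝒴) : (ℕ → 𝒴 × ℝ) → ℝ :=
  P[fun ω => B.indicator (fun _ => (1 : ℝ)) ((ω n).1) | cylG (𝒴 × ℝ) n]

open ProbabilityTheory Topology

section Aux

variable {𝒴 : Type*} [MeasurableSpace 𝒴]
set_option linter.unusedSectionVars false

/-- indicator of the n-th Y coordinate -/
noncomputable def IndB {𝒴 : Type*} (n : ℕ) (B : Set 𝒴) : (ℕ → 𝒴 × ℝ) → ℝ :=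
  fun ω => B.indicator (fun _ => (1 : ℝ)) ((ω n).1)

noncomputable def SZm {𝒴 : Type*} (α : ℝ) (n : ℕ) : (ℕ → 𝒴 × ℝ) → ℝ :=
  fun ω => α + ∑ i ∈ Finset.range n, (ω i).2

noncomputable def pSet {𝒴 : Type*} [MeasurableSpace 𝒴] (P : Measure (ℕ → 𝒴 × ℝ)) (B : Set 𝒴) : ℝ :=
  (P {ω' | (ω' 0).1 ∈ B}).toReal

lemma cylG_le (S : Type*) [MeasurableSpace S] (n : ℕ) :
    cylG S n ≤ (inferInstance : MeasurableSpace (ℕ → S)) :=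
by
  rw [cylG]
  exact Measurable.comap_le (measurable_pi_lambda (fun (ω : ℕ → S) (i : Fin n) => ω i)
    (fun i => measurable_pi_apply (i : ℕ)))

lemma cylG_mono (S : Type*) [MeasurableSpace S] {m n : ℕ} (h : m ≤ n) :
    cylG S m ≤ cylG S n := by
  have hre : Measurable (fun (x : Fin n → S) (i : Fin m) => x (Fin.castLE h i)) :=
    measurable_pi_lambda _ fun i => measurable_pi_apply _
  calc cylG S m
      = MeasurableSpace.comap (fun ω (i : Fin m) => ω i) inferInstance := rfl
    _ = MeasurableSpace.comap (fun ω (i : Fin n) => ω i)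
          (MeasurableSpace.comap (fun (x : Fin n → S) (i : Fin m) => x (Fin.castLE h i))
            inferInstance) := by
        rw [MeasurableSpace.comap_comp]; rfl
    _ ≤ cylG S n := MeasurableSpace.comap_mono hre.comap_le

lemma meas_coord_cylG {S : Type*} [MeasurableSpace S] {n i : ℕ} (h : i < n) :
    Measurable[cylG S n] (fun ω => ω i) := by
  have : (fun (ω : ℕ → S) => ω i)
      = (fun (x : Fin n → S) => x ⟨i, h⟩) ∘ (fun ω (j : Fin n) => ω j) := rfl
  rw [this]
  exact (measurable_pi_apply _).comp (comap_measurable _)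

lemma meas_SZm_cylG {α : ℝ} {n : ℕ} : Measurable[cylG (𝒴 × ℝ) n] (SZm α n) := by
  apply Measurable.const_add
  apply Finset.measurable_sum
  intro i hi
  exact ((meas_coord_cylG (Finset.mem_range.mp hi)).snd)

lemma meas_IndB {n : ℕ} {B : Set 𝒴} (hB : MeasurableSet B) : Measurable (IndB n B) := by
  exact ((measurable_const.indicator hB)).comp ((measurable_pi_apply n).fst)

lemma IndB_nonneg {n : ℕ} {B : Set 𝒴} (ω : ℕ → 𝒴 × ℝ) : 0 ≤ IndB n B ω := by
  unfold IndB; exact Set.indicator_nonneg (fun _ _ => zero_le_one) _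

lemma IndB_le_one {n : ℕ} {B : Set 𝒴} (ω : ℕ → 𝒴 × ℝ) : IndB n B ω ≤ 1 := by
  unfold IndB; exact Set.indicator_le_self' (fun _ _ => zero_le_one) _ |>.trans (by
    by_cases h : (ω n).1 ∈ B <;> simp [h])

end Aux

section Aux2

variable {𝒴 : Type*} [MeasurableSpace 𝒴] {P : Measure (ℕ → 𝒴 × ℝ)} [IsProbabilityMeasure P]
set_option linter.unusedSectionVars false

lemma integrable_of_bound {f : (ℕ → 𝒴 × ℝ) → ℝ} (hf : AEStronglyMeasurable f P) (c : ℝ)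
    (h : ∀ᵐ ω ∂P, |f ω| ≤ c) : Integrable f P :=
  Integrable.mono' (integrable_const c) hf (by simpa [Real.norm_eq_abs] using h)

lemma integrable_IndB {n : ℕ} {B : Set 𝒴} (hB : MeasurableSet B) : Integrable (IndB n B) P :=
  integrable_of_bound (meas_IndB hB).aestronglyMeasurable 1
    (ae_of_all _ fun ω => abs_le.2 ⟨by linarith [IndB_nonneg (n := n) (B := B) ω], IndB_le_one ω⟩)

lemma predY_eq_condexp (n : ℕ) (B : Set 𝒴) : predY P n B = P[IndB n B | cylG (𝒴 × ℝ) n] := rfl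

lemma predY_sm (n : ℕ) (B : Set 𝒴) : StronglyMeasurable[cylG (𝒴 × ℝ) n] (predY P n B) :=
  stronglyMeasurable_condExp

lemma predY_meas (n : ℕ) (B : Set 𝒴) : Measurable (predY P n B) :=
  ((predY_sm (P := P) n B).mono (cylG_le _ n)).measurable

lemma predY_nonneg (n : ℕ) (B : Set 𝒴) : 0 ≤ᵐ[P] predY P n B :=
  condExp_nonneg (ae_of_all _ fun ω => IndB_nonneg ω)

lemma predY_le_one (n : ℕ) {B : Set 𝒴} (hB : MeasurableSet B) : predY P n B ≤ᵐ[P] 1 := by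
  have h := condExp_mono (μ := P) (m := cylG (𝒴 × ℝ) n) (integrable_IndB hB)
    (integrable_const (1 : ℝ)) (ae_of_all _ fun ω => IndB_le_one (n := n) (B := B) ω)
  calc predY P n B ≤ᵐ[P] P[(fun _ => (1:ℝ)) | cylG (𝒴 × ℝ) n] := h
    _ =ᵐ[P] fun _ => (1:ℝ) :=
        Filter.EventuallyEq.of_eq (condExp_const (μ := P) (cylG_le (𝒴 × ℝ) n) (1:ℝ))
    _ = 1 := rfl

lemma integrable_predY (n : ℕ) (B : Set 𝒴) : Integrable (predY P n B) P := integrable_condExp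

lemma setIntegral_predY {n : ℕ} {B : Set 𝒴} (hB : MeasurableSet B) {s : Set (ℕ → 𝒴 × ℝ)}
    (hs : MeasurableSet[cylG (𝒴 × ℝ) n] s) :
    ∫ ω in s, predY P n B ω ∂P = ∫ ω in s, IndB n B ω ∂P :=
  setIntegral_condExp (cylG_le _ n) (integrable_IndB hB) hs

/-- the sigma-algebra generated by the first n coordinates together with `Z_n`. -/
noncomputable def mJoin (𝒴 : Type*) [MeasurableSpace 𝒴] (n : ℕ) : MeasurableSpace (ℕ → 𝒴 × ℝ) :=
  cylG (𝒴 × ℝ) n ⊔ MeasurableSpace.comap (fun ω => (ω n).2) inferInstance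

lemma mJoin_le (n : ℕ) : mJoin 𝒴 n ≤ (inferInstance : MeasurableSpace (ℕ → 𝒴 × ℝ)) :=
  sup_le (cylG_le _ n) ((measurable_pi_apply n).snd.comap_le)

lemma cylG_le_comapR (n : ℕ) : cylG (𝒴 × ℝ) n ≤ MeasurableSpace.comap
    (fun ω : ℕ → 𝒴 × ℝ => ((fun i : Fin n => ω i), (ω n).1)) inferInstance := by
  have : (fun ω : ℕ → 𝒴 × ℝ => (fun i : Fin n => ω i))
      = Prod.fst ∘ (fun ω : ℕ → 𝒴 × ℝ => ((fun i : Fin n => ω i), (ω n).1)) := rfl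
  rw [cylG, this, ← MeasurableSpace.comap_comp]
  exact MeasurableSpace.comap_mono measurable_fst.comap_le

lemma coordY_le_comapR (n : ℕ) : MeasurableSpace.comap (fun ω : ℕ → 𝒴 × ℝ => (ω n).1)
    inferInstance ≤ MeasurableSpace.comap
    (fun ω : ℕ → 𝒴 × ℝ => ((fun i : Fin n => ω i), (ω n).1)) inferInstance := by
  have : (fun ω : ℕ → 𝒴 × ℝ => (ω n).1)
      = Prod.snd ∘ (fun ω : ℕ → 𝒴 × ℝ => ((fun i : Fin n => ω i), (ω n).1)) := rfl
  rw [this, ← MeasurableSpace.comap_comp]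
  exact MeasurableSpace.comap_mono measurable_snd.comap_le

lemma integral_indicator_one_mul {s : Set (ℕ → 𝒴 × ℝ)} (hs : MeasurableSet s)
    (h : (ℕ → 𝒴 × ℝ) → ℝ) :
    ∫ ω, s.indicator (fun _ => (1:ℝ)) ω * h ω ∂P = ∫ ω in s, h ω ∂P := by
  rw [← integral_indicator hs]
  congr 1
  funext ω
  by_cases hω : ω ∈ s <;> simp [hω]

end Aux2

section Aux3

variable {𝒴 : Type*} [MeasurableSpace 𝒴] {P : Measure (ℕ → 𝒴 × ℝ)} [IsProbabilityMeasure P]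
set_option linter.unusedSectionVars false

lemma condexp_join_eq {n : ℕ} {B : Set 𝒴}
    (hindep : Indep (MeasurableSpace.comap (fun ω : ℕ → 𝒴 × ℝ => (ω n).2) inferInstance)
      (MeasurableSpace.comap (fun ω : ℕ → 𝒴 × ℝ => ((fun i : Fin n => ω i), (ω n).1))
        inferInstance) P)
    (hB : MeasurableSet B) :
    P[IndB n B | mJoin 𝒴 n] =ᵐ[P] predY P n B := by
  have hm : mJoin 𝒴 n ≤ (inferInstance : MeasurableSpace (ℕ → 𝒴 × ℝ)) := mJoin_le n
  have hgmeas : Measurable (predY P n B) := predY_meas n B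
  have hfmeas : Measurable (IndB n B) := meas_IndB hB
  have hgint : Integrable (predY P n B) P := integrable_predY n B
  have hfint : Integrable (IndB n B) P := integrable_IndB hB
  have hg0 : 0 ≤ᵐ[P] predY P n B := predY_nonneg n B
  have hg1 : predY P n B ≤ᵐ[P] 1 := predY_le_one n hB
  have hf0 : 0 ≤ᵐ[P] IndB n B := ae_of_all _ fun ω => IndB_nonneg ω
  set ρ1 := P.withDensity (fun ω => ENNReal.ofReal (predY P n B ω)) with hρ1
  set ρ2 := P.withDensity (fun ω => ENNReal.ofReal (IndB n B ω)) with hρ2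
  have hfin1 : IsFiniteMeasure ρ1 := isFiniteMeasure_withDensity
    (by rw [← ofReal_integral_eq_lintegral_ofReal hgint hg0]; exact ENNReal.ofReal_ne_top)
  set C : Set (Set (ℕ → 𝒴 × ℝ)) := {s | ∃ s₁ s₂, MeasurableSet[cylG (𝒴 × ℝ) n] s₁ ∧
    MeasurableSet[MeasurableSpace.comap (fun ω : ℕ → 𝒴 × ℝ => (ω n).2) inferInstance] s₂ ∧
    s = s₁ ∩ s₂} with hC
  have hsupl : cylG (𝒴 × ℝ) n ≤ mJoin 𝒴 n := le_sup_left
  have hsupr : MeasurableSpace.comap (fun ω : ℕ → 𝒴 × ℝ => (ω n).2) inferInstance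
      ≤ mJoin 𝒴 n := le_sup_right
  have hgen : mJoin 𝒴 n = MeasurableSpace.generateFrom C := by
    apply le_antisymm
    · refine sup_le ?_ ?_
      · intro s hs
        exact MeasurableSpace.measurableSet_generateFrom
          ⟨s, univ, hs, MeasurableSet.univ, (Set.inter_univ s).symm⟩
      · intro s hs
        exact MeasurableSpace.measurableSet_generateFrom
          ⟨univ, s, MeasurableSet.univ, hs, (Set.univ_inter s).symm⟩
    · refine MeasurableSpace.generateFrom_le ?_
      rintro s ⟨s₁, s₂, h1, h2, rfl⟩
      exact (hsupl _ h1).inter (hsupr _ h2)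
  have hpi : IsPiSystem C := by
    rintro s ⟨s₁, s₂, h1, h2, rfl⟩ t ⟨t₁, t₂, h1', h2', rfl⟩ _
    refine ⟨s₁ ∩ t₁, s₂ ∩ t₂, h1.inter h1', h2.inter h2', ?_⟩
    rw [Set.inter_inter_inter_comm]
  -- equality on the π-system
  have hμν : ∀ s ∈ C, ρ1 s = ρ2 s := by
    rintro s ⟨s₁, s₂, h1, h2, rfl⟩
    have hs₁m : MeasurableSet s₁ := cylG_le _ n _ h1
    have hs₂m : MeasurableSet s₂ := (measurable_pi_apply n).snd.comap_le _ h2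
    have hsm : MeasurableSet (s₁ ∩ s₂) := hs₁m.inter hs₂m
    have key : ∫ ω in s₁ ∩ s₂, predY P n B ω ∂P = ∫ ω in s₁ ∩ s₂, IndB n B ω ∂P := by
      set X := s₂.indicator (fun _ => (1:ℝ)) with hX
      set Y1 := fun ω => s₁.indicator (fun _ => (1:ℝ)) ω * predY P n B ω with hY1
      set Y2 := fun ω => s₁.indicator (fun _ => (1:ℝ)) ω * IndB n B ω with hY2
      have hXm : Measurable[MeasurableSpace.comap (fun ω : ℕ → 𝒴 × ℝ => (ω n).2)
          inferInstance] X := measurable_const.indicator h2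
      have hY1m : Measurable[MeasurableSpace.comap
          (fun ω : ℕ → 𝒴 × ℝ => ((fun i : Fin n => ω i), (ω n).1)) inferInstance] Y1 :=
        (measurable_const.indicator (cylG_le_comapR n _ h1)).mul
          (((predY_sm n B).mono (cylG_le_comapR n)).measurable)
      have hY2m : Measurable[MeasurableSpace.comap
          (fun ω : ℕ → 𝒴 × ℝ => ((fun i : Fin n => ω i), (ω n).1)) inferInstance] Y2 :=
        (measurable_const.indicator (cylG_le_comapR n _ h1)).mul
          (Measurable.mono
            ((measurable_const.indicator hB).comp
              (comap_measurable (fun ω : ℕ → 𝒴 × ℝ => (ω n).1)))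
            (coordY_le_comapR n) le_rfl)
      have hXint : Integrable X P := integrable_of_bound
        (measurable_const.indicator hs₂m).aestronglyMeasurable 1
        (ae_of_all _ fun ω => by
          by_cases hω : ω ∈ s₂ <;> simp [hX, Set.indicator_of_mem, Set.indicator_of_notMem, hω])
      have hY1int : Integrable Y1 P := integrable_of_bound
        ((measurable_const.indicator hs₁m).mul hgmeas).aestronglyMeasurable 1 (by
          filter_upwards [hg0, hg1] with ω h0 h1'
          rw [hY1, abs_mul]
          refine mul_le_one₀ ?_ (abs_nonneg _) (by rw [abs_of_nonneg h0]; exact h1')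
          by_cases hω : ω ∈ s₁ <;>
            simp [Set.indicator_of_mem, Set.indicator_of_notMem, hω])
      have hY2int : Integrable Y2 P := integrable_of_bound
        ((measurable_const.indicator hs₁m).mul hfmeas).aestronglyMeasurable 1
        (ae_of_all _ fun ω => by
          rw [hY2, abs_mul]
          refine mul_le_one₀ ?_ (abs_nonneg _)
            (by rw [abs_of_nonneg (IndB_nonneg ω)]; exact IndB_le_one ω)
          by_cases hω : ω ∈ s₁ <;>
            simp [Set.indicator_of_mem, Set.indicator_of_notMem, hω])
      have hIndep1 : IndepFun X Y1 P := (IndepFun_iff_Indep X Y1 P).mpr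
        (indep_of_indep_of_le_right (indep_of_indep_of_le_left hindep hXm.comap_le)
          hY1m.comap_le)
      have hIndep2 : IndepFun X Y2 P := (IndepFun_iff_Indep X Y2 P).mpr
        (indep_of_indep_of_le_right (indep_of_indep_of_le_left hindep hXm.comap_le)
          hY2m.comap_le)
      have hM1 := IndepFun.integral_mul_eq_mul_integral hIndep1 hXint.aestronglyMeasurable hY1int.aestronglyMeasurable
      have hM2 := IndepFun.integral_mul_eq_mul_integral hIndep2 hXint.aestronglyMeasurable hY2int.aestronglyMeasurable
      have e1 : ∫ ω in s₁ ∩ s₂, predY P n B ω ∂P = ∫ ω, (X * Y1) ω ∂P := by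
        rw [← integral_indicator hsm]
        congr 1
        funext ω
        by_cases h1ω : ω ∈ s₁ <;> by_cases h2ω : ω ∈ s₂ <;>
          simp [hX, hY1, Set.indicator_of_mem, Set.indicator_of_notMem, h1ω, h2ω,
            Set.mem_inter_iff]
      have e2 : ∫ ω in s₁ ∩ s₂, IndB n B ω ∂P = ∫ ω, (X * Y2) ω ∂P := by
        rw [← integral_indicator hsm]
        congr 1
        funext ω
        by_cases h1ω : ω ∈ s₁ <;> by_cases h2ω : ω ∈ s₂ <;>
          simp [hX, hY2, Set.indicator_of_mem, Set.indicator_of_notMem, h1ω, h2ω,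
            Set.mem_inter_iff]
      have emid : ∫ ω, Y1 ω ∂P = ∫ ω, Y2 ω ∂P := by
        rw [hY1, hY2, integral_indicator_one_mul hs₁m, integral_indicator_one_mul hs₁m]
        exact setIntegral_predY hB h1
      rw [e1, e2, hM1, hM2, emid]
    -- now transfer to the withDensity measures
    rw [hρ1, hρ2, withDensity_apply _ hsm, withDensity_apply _ hsm,
      ← ofReal_integral_eq_lintegral_ofReal hgint.integrableOn (ae_restrict_of_ae hg0),
      ← ofReal_integral_eq_lintegral_ofReal hfint.integrableOn (ae_restrict_of_ae hf0), key]
  have hext : ∀ s, MeasurableSet[mJoin 𝒴 n] s → ρ1 s = ρ2 s := fun s hs =>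
    ext_on_measurableSpace_of_generate_finite _ C hμν hm hgen hpi
      (hμν univ ⟨univ, univ, MeasurableSet.univ, MeasurableSet.univ,
        (Set.univ_inter univ).symm⟩) hs
  refine (ae_eq_condExp_of_forall_setIntegral_eq hm hfint
    (fun s _ _ => hgint.integrableOn) (fun s hs _ => ?_)
    (((predY_sm n B).mono hsupl).aestronglyMeasurable)).symm
  have hsm : MeasurableSet s := hm _ hs
  have e1 : ENNReal.ofReal (∫ ω in s, predY P n B ω ∂P) = ρ1 s := by
    rw [hρ1, withDensity_apply _ hsm,
      ← ofReal_integral_eq_lintegral_ofReal hgint.integrableOn (ae_restrict_of_ae hg0)]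
  have e2 : ENNReal.ofReal (∫ ω in s, IndB n B ω ∂P) = ρ2 s := by
    rw [hρ2, withDensity_apply _ hsm,
      ← ofReal_integral_eq_lintegral_ofReal hfint.integrableOn (ae_restrict_of_ae hf0)]
  have := e1.trans ((hext s hs).trans e2.symm)
  have hgs : 0 ≤ ∫ ω in s, predY P n B ω ∂P :=
    integral_nonneg_of_ae (ae_restrict_of_ae hg0)
  have hfs : 0 ≤ ∫ ω in s, IndB n B ω ∂P :=
    integral_nonneg_of_ae (ae_restrict_of_ae hf0)
  calc ∫ ω in s, predY P n B ω ∂P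
      = (ENNReal.ofReal (∫ ω in s, predY P n B ω ∂P)).toReal :=
        (ENNReal.toReal_ofReal hgs).symm
    _ = (ENNReal.ofReal (∫ ω in s, IndB n B ω ∂P)).toReal := by rw [this]
    _ = ∫ ω in s, IndB n B ω ∂P := ENNReal.toReal_ofReal hfs

end Aux3

section Aux4

variable {𝒴 : Type*} [MeasurableSpace 𝒴] {P : Measure (ℕ → 𝒴 × ℝ)} [IsProbabilityMeasure P]
set_option linter.unusedSectionVars false

/-- Key orthogonality lemma: any bounded `mJoin n`-measurable `F` is orthogonal to
`IndB n B - predY P n B`. -/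
lemma integral_mul_indicator_sub_predY {n : ℕ} {B : Set 𝒴}
    (hindep : Indep (MeasurableSpace.comap (fun ω : ℕ → 𝒴 × ℝ => (ω n).2) inferInstance)
      (MeasurableSpace.comap (fun ω : ℕ → 𝒴 × ℝ => ((fun i : Fin n => ω i), (ω n).1))
        inferInstance) P)
    (hB : MeasurableSet B) {F : (ℕ → 𝒴 × ℝ) → ℝ}
    (hF : Measurable[mJoin 𝒴 n] F) (c : ℝ) (hFb : ∀ᵐ ω ∂P, |F ω| ≤ c) :
    ∫ ω, F ω * (IndB n B ω - predY P n B ω) ∂P = 0 := by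
  have hm := mJoin_le (𝒴 := 𝒴) n
  have hFamb : Measurable F := hF.mono hm le_rfl
  have hg0 : 0 ≤ᵐ[P] predY P n B := predY_nonneg n B
  have hg1 : predY P n B ≤ᵐ[P] 1 := predY_le_one n hB
  have habsc : ∀ᵐ ω ∂P, ‖F ω‖ ≤ c := by simpa [Real.norm_eq_abs] using hFb
  have hFf : Integrable (fun ω => F ω * IndB n B ω) P := by
    refine integrable_of_bound (hFamb.mul (meas_IndB hB)).aestronglyMeasurable c ?_
    filter_upwards [hFb] with ω hω
    rw [abs_mul]
    calc |F ω| * |IndB n B ω| ≤ |F ω| * 1 := by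
          refine mul_le_mul_of_nonneg_left ?_ (abs_nonneg _)
          rw [abs_of_nonneg (IndB_nonneg ω)]; exact IndB_le_one ω
      _ = |F ω| := mul_one _
      _ ≤ c := hω
  have hFg : Integrable (fun ω => F ω * predY P n B ω) P := by
    refine integrable_of_bound (hFamb.mul (predY_meas n B)).aestronglyMeasurable c ?_
    filter_upwards [hFb, hg0, hg1] with ω hω h0 h1
    rw [abs_mul]
    calc |F ω| * |predY P n B ω| ≤ |F ω| * 1 := by
          refine mul_le_mul_of_nonneg_left ?_ (abs_nonneg _)
          rw [abs_of_nonneg h0]; exact h1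
      _ = |F ω| := mul_one _
      _ ≤ c := hω
  have hpull : P[(F * IndB n B) | mJoin 𝒴 n] =ᵐ[P] F * P[IndB n B | mJoin 𝒴 n] :=
    condExp_stronglyMeasurable_mul_of_bound hm hF.stronglyMeasurable (integrable_IndB hB)
      c habsc
  have h1 : ∫ ω, F ω * IndB n B ω ∂P = ∫ ω, F ω * predY P n B ω ∂P := by
    have e0 : ∫ ω, F ω * IndB n B ω ∂P = ∫ ω, (P[(F * IndB n B) | mJoin 𝒴 n]) ω ∂P :=
      (integral_condExp hm).symm
    rw [e0, integral_congr_ae hpull]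
    refine integral_congr_ae ?_
    filter_upwards [condexp_join_eq hindep hB] with ω hω
    simp only [Pi.mul_apply, hω]
  have : (fun ω => F ω * (IndB n B ω - predY P n B ω))
      = fun ω => F ω * IndB n B ω - F ω * predY P n B ω := by
    funext ω; ring
  rw [this, integral_sub hFf hFg, h1, sub_self]

end Aux4

section Aux5

variable {𝒴 : Type*} [MeasurableSpace 𝒴] {P : Measure (ℕ → 𝒴 × ℝ)} [IsProbabilityMeasure P]
variable {α a b : ℝ}
set_option linter.unusedSectionVars false

lemma SZm_ge {n : ℕ} {ω : ℕ → 𝒴 × ℝ} (hω : ∀ i, (ω i).2 ∈ Set.Icc a b) :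
    α + n * a ≤ SZm α n ω := by
  unfold SZm
  have : (n : ℝ) * a = ∑ _i ∈ Finset.range n, a := by
    rw [Finset.sum_const, Finset.card_range, nsmul_eq_mul]
  rw [this]
  exact add_le_add le_rfl (Finset.sum_le_sum fun i _ => (hω i).1)

lemma SZm_pos (hα : 0 < α) (ha : 0 < a) {n : ℕ} {ω : ℕ → 𝒴 × ℝ}
    (hω : ∀ i, (ω i).2 ∈ Set.Icc a b) : 0 < SZm α n ω := by
  have := SZm_ge (α := α) (n := n) hω
  nlinarith [Nat.cast_nonneg (α := ℝ) n]

lemma integral_IndB_zero {B : Set 𝒴} (hB : MeasurableSet B) :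
    ∫ ω, IndB 0 B ω ∂P = pSet P B := by
  have hpre : MeasurableSet {ω' : ℕ → 𝒴 × ℝ | (ω' 0).1 ∈ B} :=
    (measurable_pi_apply 0).fst hB
  have : (fun ω : ℕ → 𝒴 × ℝ => IndB 0 B ω)
      = ({ω' : ℕ → 𝒴 × ℝ | (ω' 0).1 ∈ B}).indicator (fun _ => (1:ℝ)) := by
    funext ω
    by_cases hω : (ω 0).1 ∈ B <;>
      simp [IndB, hω, Set.indicator_of_mem, Set.indicator_of_notMem]
  rw [this, integral_indicator_const (1:ℝ) hpre, smul_eq_mul, mul_one, pSet]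
  rfl

/-- the increment formula (5). -/
lemma predY_succ_sub (hα : 0 < α) (ha : 0 < a)
    (hZ : ∀ᵐ ω ∂P, ∀ n, (ω n).2 ∈ Set.Icc a b)
    (hpred : ∀ B : Set 𝒴, MeasurableSet B → ∀ n : ℕ, 1 ≤ n →
      predY P n B =ᵐ[P] fun ω =>
        (α * (P {ω' | (ω' 0).1 ∈ B}).toReal
          + ∑ i ∈ Finset.range n, (ω i).2 * B.indicator (fun _ => (1 : ℝ)) ((ω i).1))
        / (α + ∑ i ∈ Finset.range n, (ω i).2))
    {B : Set 𝒴} (hB : MeasurableSet B) {j : ℕ} (hj : 1 ≤ j) :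
    (fun ω => predY P (j+1) B ω - predY P j B ω) =ᵐ[P]
      fun ω => (ω j).2 * (IndB j B ω - predY P j B ω) / SZm α (j+1) ω := by
  filter_upwards [hpred B hB j hj, hpred B hB (j+1) (by omega), hZ] with ω h1 h2 hω
  have hS : 0 < α + ∑ i ∈ Finset.range j, (ω i).2 := SZm_pos hα ha hω
  have hS' : 0 < α + ∑ i ∈ Finset.range (j+1), (ω i).2 := SZm_pos hα ha hω
  set N := α * (P {ω' | (ω' 0).1 ∈ B}).toReal
    + ∑ i ∈ Finset.range j, (ω i).2 * B.indicator (fun _ => (1 : ℝ)) ((ω i).1) with hN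
  set S := α + ∑ i ∈ Finset.range j, (ω i).2 with hS0
  have h2' : predY P (j+1) B ω = (N + (ω j).2 * IndB j B ω) / (S + (ω j).2) := by
    rw [h2, Finset.sum_range_succ, Finset.sum_range_succ]
    simp only [hN, hS0, IndB]
    ring
  have h1' : predY P j B ω = N / S := h1
  have hSZ : SZm α (j+1) ω = S + (ω j).2 := by
    rw [SZm, hS0, Finset.sum_range_succ]; ring
  rw [h2', h1', hSZ]
  have hSne : S ≠ 0 := ne_of_gt hS
  have hS'ne : S + (ω j).2 ≠ 0 := by
    have : α + ∑ i ∈ Finset.range (j+1), (ω i).2 = S + (ω j).2 := by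
      rw [hS0, Finset.sum_range_succ]; ring
    rw [← this]; exact ne_of_gt hS'
  field_simp
  ring

/-- orthogonality: `cylG j`-measurable bounded `W` is orthogonal to the increment. -/
lemma integral_W_delta_zero (hα : 0 < α) (ha : 0 < a)
    (hZ : ∀ᵐ ω ∂P, ∀ n, (ω n).2 ∈ Set.Icc a b)
    (hindep : ∀ n : ℕ, Indep
      (MeasurableSpace.comap (fun ω : ℕ → 𝒴 × ℝ => (ω n).2) inferInstance)
      (MeasurableSpace.comap
        (fun ω : ℕ → 𝒴 × ℝ => ((fun i : Fin n => ω i), (ω n).1)) inferInstance) P)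
    (hpred : ∀ B : Set 𝒴, MeasurableSet B → ∀ n : ℕ, 1 ≤ n →
      predY P n B =ᵐ[P] fun ω =>
        (α * (P {ω' | (ω' 0).1 ∈ B}).toReal
          + ∑ i ∈ Finset.range n, (ω i).2 * B.indicator (fun _ => (1 : ℝ)) ((ω i).1))
        / (α + ∑ i ∈ Finset.range n, (ω i).2))
    {B : Set 𝒴} (hB : MeasurableSet B) {j : ℕ} (hj : 1 ≤ j)
    {W : (ℕ → 𝒴 × ℝ) → ℝ} (hW : Measurable[cylG (𝒴 × ℝ) j] W) (c : ℝ)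
    (hWb : ∀ᵐ ω ∂P, |W ω| ≤ c) :
    ∫ ω, W ω * (predY P (j+1) B ω - predY P j B ω) ∂P = 0 := by
  set F : (ℕ → 𝒴 × ℝ) → ℝ := fun ω => W ω * ((ω j).2 / SZm α (j+1) ω) with hF
  have hFmeas : Measurable[mJoin 𝒴 j] F := by
    have hWj : Measurable[mJoin 𝒴 j] W := hW.mono le_sup_left le_rfl
    have hZj : Measurable[mJoin 𝒴 j] (fun ω : ℕ → 𝒴 × ℝ => (ω j).2) :=
      (comap_measurable _).mono le_sup_right le_rfl
    have hSj : Measurable[mJoin 𝒴 j] (SZm α (j+1)) := by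
      have : SZm α (j+1) = fun ω : ℕ → 𝒴 × ℝ => SZm α j ω + (ω j).2 := by
        funext ω; rw [SZm, SZm, Finset.sum_range_succ]; ring
      rw [this]
      exact ((meas_SZm_cylG (α := α) (n := j)).mono le_sup_left le_rfl).add hZj
    exact hWj.mul (hZj.div hSj)
  have hc0 : 0 ≤ c := by
    have hne : (MeasureTheory.ae P).NeBot := ae_neBot.2 (IsProbabilityMeasure.ne_zero P)
    obtain ⟨ω, hω⟩ := hWb.exists
    exact le_trans (abs_nonneg _) hω
  have hFb : ∀ᵐ ω ∂P, |F ω| ≤ c * (b / α) := by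
    filter_upwards [hWb, hZ] with ω hWω hZω
    have hS : 0 < SZm α (j+1) ω := SZm_pos hα ha hZω
    have hSα : α ≤ SZm α (j+1) ω := by
      have := SZm_ge (α := α) (n := j+1) hZω
      nlinarith [Nat.cast_nonneg (α := ℝ) (j+1), ha.le]
    have hZpos : 0 < (ω j).2 := lt_of_lt_of_le ha (hZω j).1
    have hq : |(ω j).2 / SZm α (j+1) ω| ≤ b / α := by
      rw [abs_of_nonneg (div_nonneg hZpos.le hS.le)]
      exact div_le_div₀ (le_trans hZpos.le (hZω j).2) (hZω j).2 hα hSα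
    rw [hF, abs_mul]
    exact mul_le_mul hWω hq (abs_nonneg _) hc0
  have heq : ∫ ω, W ω * (predY P (j+1) B ω - predY P j B ω) ∂P
      = ∫ ω, F ω * (IndB j B ω - predY P j B ω) ∂P := by
    refine integral_congr_ae ?_
    filter_upwards [predY_succ_sub hα ha hZ hpred hB hj] with ω hω
    rw [hω, hF]
    ring
  rw [heq]
  exact integral_mul_indicator_sub_predY (hindep j) hB hFmeas (c * (b / α)) hFb

end Aux5

section Aux6

variable {𝒴 : Type*} [MeasurableSpace 𝒴] {P : Measure (ℕ → 𝒴 × ℝ)} [IsProbabilityMeasure P]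
variable {α a b : ℝ}
set_option linter.unusedSectionVars false

lemma integral_predY_succ (hα : 0 < α) (ha : 0 < a)
    (hZ : ∀ᵐ ω ∂P, ∀ n, (ω n).2 ∈ Set.Icc a b)
    (hindep : ∀ n : ℕ, Indep
      (MeasurableSpace.comap (fun ω : ℕ → 𝒴 × ℝ => (ω n).2) inferInstance)
      (MeasurableSpace.comap
        (fun ω : ℕ → 𝒴 × ℝ => ((fun i : Fin n => ω i), (ω n).1)) inferInstance) P)
    (hpred : ∀ B : Set 𝒴, MeasurableSet B → ∀ n : ℕ, 1 ≤ n →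
      predY P n B =ᵐ[P] fun ω =>
        (α * (P {ω' | (ω' 0).1 ∈ B}).toReal
          + ∑ i ∈ Finset.range n, (ω i).2 * B.indicator (fun _ => (1 : ℝ)) ((ω i).1))
        / (α + ∑ i ∈ Finset.range n, (ω i).2))
    {B : Set 𝒴} (hB : MeasurableSet B) {j : ℕ} (hj : 1 ≤ j) :
    ∫ ω, predY P (j+1) B ω ∂P = ∫ ω, predY P j B ω ∂P := by
  have h0 := integral_W_delta_zero hα ha hZ hindep hpred hB hj
    (W := fun _ => (1:ℝ)) measurable_const 1 (ae_of_all _ (by simp))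
  have h1 : ∫ ω, (predY P (j+1) B ω - predY P j B ω) ∂P = 0 := by simpa using h0
  have h2 := integral_sub (integrable_predY (P := P) (j+1) B) (integrable_predY (P := P) j B)
  rw [h2] at h1
  linarith

lemma integral_predY_le (hα : 0 < α) (ha : 0 < a) (hb : 0 < b)
    (hZ : ∀ᵐ ω ∂P, ∀ n, (ω n).2 ∈ Set.Icc a b)
    (hindep : ∀ n : ℕ, Indep
      (MeasurableSpace.comap (fun ω : ℕ → 𝒴 × ℝ => (ω n).2) inferInstance)
      (MeasurableSpace.comap
        (fun ω : ℕ → 𝒴 × ℝ => ((fun i : Fin n => ω i), (ω n).1)) inferInstance) P)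
    (hpred : ∀ B : Set 𝒴, MeasurableSet B → ∀ n : ℕ, 1 ≤ n →
      predY P n B =ᵐ[P] fun ω =>
        (α * (P {ω' | (ω' 0).1 ∈ B}).toReal
          + ∑ i ∈ Finset.range n, (ω i).2 * B.indicator (fun _ => (1 : ℝ)) ((ω i).1))
        / (α + ∑ i ∈ Finset.range n, (ω i).2))
    {B : Set 𝒴} (hB : MeasurableSet B) :
    ∀ j, 1 ≤ j → ∫ ω, predY P j B ω ∂P ≤ (α + b) / (α + a) * pSet P B := by
  intro j hj
  induction j, hj using Nat.le_induction with
  | base =>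
    have hp0 : 0 ≤ pSet P B := ENNReal.toReal_nonneg
    have hbound : ∀ᵐ ω ∂P, predY P 1 B ω
        ≤ (α * pSet P B + b * IndB 0 B ω) / (α + a) := by
      filter_upwards [hpred B hB 1 le_rfl, hZ] with ω h1 hω
      rw [h1]
      simp only [Finset.sum_range_one, pSet, IndB]
      have hI0 : 0 ≤ B.indicator (fun _ => (1:ℝ)) ((ω 0).1) :=
        Set.indicator_nonneg (fun _ _ => zero_le_one) _
      refine div_le_div₀ ?_ ?_ (by linarith) (by linarith [(hω 0).1])
      · have : 0 ≤ α * (P {ω' | (ω' 0).1 ∈ B}).toReal :=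
          mul_nonneg hα.le ENNReal.toReal_nonneg
        nlinarith
      · exact add_le_add le_rfl (mul_le_mul_of_nonneg_right (hω 0).2 hI0)
    have hint : Integrable (fun ω => (α * pSet P B + b * IndB 0 B ω) / (α + a)) P :=
      ((integrable_const _).add ((integrable_IndB hB).const_mul b)).div_const _
    have hmono := integral_mono_ae (integrable_predY 1 B) hint hbound
    have heval : ∫ ω, (α * pSet P B + b * IndB 0 B ω) / (α + a) ∂P
        = (α * pSet P B + b * pSet P B) / (α + a) := by
      rw [integral_div, integral_add (integrable_const _) ((integrable_IndB hB).const_mul b),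
        integral_const, MeasureTheory.integral_const_mul, integral_IndB_zero hB]
      simp [measure_univ]
    rw [heval] at hmono
    have hden : (0:ℝ) < α + a := by linarith
    calc ∫ ω, predY P 1 B ω ∂P ≤ (α * pSet P B + b * pSet P B) / (α + a) := hmono
      _ = (α + b) / (α + a) * pSet P B := by field_simp
  | succ j hj ih =>
    rw [integral_predY_succ hα ha hZ hindep hpred hB hj]
    exact ih

lemma integral_IndB_eq {j : ℕ} {B : Set 𝒴} (hB : MeasurableSet B) :
    ∫ ω, IndB j B ω ∂P = ∫ ω, predY P j B ω ∂P :=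
  (integral_condExp (cylG_le (𝒴 × ℝ) j) (f := IndB j B)).symm

lemma sum_IndB_le {B : ℕ → Set 𝒴} (hdisj : Pairwise (Function.onFun Disjoint B))
    (j K : ℕ) (ω : ℕ → 𝒴 × ℝ) :
    ∑ k ∈ Finset.range K, IndB j (B k) ω ≤ IndB j (⋃ k, B k) ω := by
  by_cases hex : ∃ k0 ∈ Finset.range K, (ω j).1 ∈ B k0
  · obtain ⟨k0, hk0K, hk0⟩ := hex
    have hU : (ω j).1 ∈ ⋃ k, B k := Set.mem_iUnion.2 ⟨k0, hk0⟩
    have hsum : ∑ k ∈ Finset.range K, IndB j (B k) ω = IndB j (B k0) ω := by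
      refine Finset.sum_eq_single_of_mem k0 hk0K fun k _ hne => ?_
      have hnot : (ω j).1 ∉ B k := fun hmem =>
        Set.disjoint_left.1 (hdisj hne) hmem hk0
      simp [IndB, hnot]
    rw [hsum]
    simp [IndB, hk0, hU]
  · push_neg at hex
    have h0 : ∑ k ∈ Finset.range K, IndB j (B k) ω = 0 :=
      Finset.sum_eq_zero fun k hk => by simp [IndB, hex k hk]
    rw [h0]
    exact IndB_nonneg ω

lemma sum_pSet_le {B : ℕ → Set 𝒴} (hBk : ∀ k, MeasurableSet (B k))
    (hdisj : Pairwise (Function.onFun Disjoint B)) (K : ℕ) :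
    ∑ k ∈ Finset.range K, pSet P (B k) ≤ pSet P (⋃ k, B k) := by
  have hpre : ∀ C : Set 𝒴, MeasurableSet C →
      MeasurableSet {ω' : ℕ → 𝒴 × ℝ | (ω' 0).1 ∈ C} := fun C hC =>
    (measurable_pi_apply 0).fst hC
  have hdisj' : ∀ k ∈ (Finset.range K : Finset ℕ), ∀ l ∈ (Finset.range K : Finset ℕ),
      k ≠ l → Disjoint {ω' : ℕ → 𝒴 × ℝ | (ω' 0).1 ∈ B k} {ω' : ℕ → 𝒴 × ℝ | (ω' 0).1 ∈ B l} := by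
    intro k _ l _ hkl
    rw [Set.disjoint_left]
    intro ω hωk hωl
    exact Set.disjoint_left.1 (hdisj hkl) hωk hωl
  have hunion : P (⋃ k ∈ Finset.range K, {ω' : ℕ → 𝒴 × ℝ | (ω' 0).1 ∈ B k})
      = ∑ k ∈ Finset.range K, P {ω' : ℕ → 𝒴 × ℝ | (ω' 0).1 ∈ B k} :=
    measure_biUnion_finset hdisj' fun k _ => hpre _ (hBk k)
  unfold pSet
  calc ∑ k ∈ Finset.range K, (P {ω' : ℕ → 𝒴 × ℝ | (ω' 0).1 ∈ B k}).toReal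
      = (∑ k ∈ Finset.range K, P {ω' : ℕ → 𝒴 × ℝ | (ω' 0).1 ∈ B k}).toReal := by
        rw [ENNReal.toReal_sum fun k _ => measure_ne_top P _]
    _ = (P (⋃ k ∈ Finset.range K, {ω' : ℕ → 𝒴 × ℝ | (ω' 0).1 ∈ B k})).toReal := by
        rw [hunion]
    _ ≤ (P {ω' : ℕ → 𝒴 × ℝ | (ω' 0).1 ∈ ⋃ k, B k}).toReal := by
        refine ENNReal.toReal_mono (measure_ne_top P _) (measure_mono ?_)
        intro ω hω
        simp only [Set.mem_iUnion, Set.mem_setOf_eq] at hω ⊢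
        obtain ⟨k, _, hk⟩ := hω
        exact ⟨k, hk⟩

end Aux6

section Aux7

variable {𝒴 : Type*} [MeasurableSpace 𝒴] {P : Measure (ℕ → 𝒴 × ℝ)} [IsProbabilityMeasure P]
variable {α a b : ℝ}
set_option linter.unusedSectionVars false

lemma integral_sum_delta_sq_le (hα : 0 < α) (ha : 0 < a) (hb : 0 < b)
    (hZ : ∀ᵐ ω ∂P, ∀ n, (ω n).2 ∈ Set.Icc a b)
    (hindep : ∀ n : ℕ, Indep
      (MeasurableSpace.comap (fun ω : ℕ → 𝒴 × ℝ => (ω n).2) inferInstance)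
      (MeasurableSpace.comap
        (fun ω : ℕ → 𝒴 × ℝ => ((fun i : Fin n => ω i), (ω n).1)) inferInstance) P)
    (hpred : ∀ B : Set 𝒴, MeasurableSet B → ∀ n : ℕ, 1 ≤ n →
      predY P n B =ᵐ[P] fun ω =>
        (α * (P {ω' | (ω' 0).1 ∈ B}).toReal
          + ∑ i ∈ Finset.range n, (ω i).2 * B.indicator (fun _ => (1 : ℝ)) ((ω i).1))
        / (α + ∑ i ∈ Finset.range n, (ω i).2))
    {B : ℕ → Set 𝒴} (hBk : ∀ k, MeasurableSet (B k))
    (hdisj : Pairwise (Function.onFun Disjoint B))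
    {j : ℕ} (hj : 1 ≤ j) (K : ℕ) :
    ∫ ω, ∑ k ∈ Finset.range K, (predY P (j+1) (B k) ω - predY P j (B k) ω)^2 ∂P
      ≤ (b / (α + ((j+1 : ℕ) : ℝ) * a))^2
        * (2 * ((α + b) / (α + a)) * pSet P (⋃ k, B k)) := by
  have hU : MeasurableSet (⋃ k, B k) := MeasurableSet.iUnion hBk
  set c : ℝ := b / (α + ((j+1 : ℕ) : ℝ) * a) with hc
  have hden : (0:ℝ) < α + ((j+1 : ℕ) : ℝ) * a := by
    have : (0:ℝ) ≤ ((j+1 : ℕ) : ℝ) := Nat.cast_nonneg _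
    nlinarith
  have hc0 : 0 ≤ c := div_nonneg hb.le hden.le
  -- pointwise a.e. bound
  have hptwise : ∀ᵐ ω ∂P, ∑ k ∈ Finset.range K,
      (predY P (j+1) (B k) ω - predY P j (B k) ω)^2
      ≤ c^2 * (IndB j (⋃ k, B k) ω + predY P j (⋃ k, B k) ω) := by
    filter_upwards [hZ,
      ae_all_iff.2 (fun k : ℕ => predY_succ_sub hα ha hZ hpred (hBk k) hj),
      ae_all_iff.2 (fun k : ℕ => predY_nonneg (P := P) j (B k)),
      ae_all_iff.2 (fun k : ℕ => predY_le_one (P := P) j (hBk k)),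
      ae_all_iff.2 (fun k : ℕ => hpred (B k) (hBk k) j hj),
      hpred (⋃ k, B k) hU j hj] with ω hZω hΔ h0 h1 hfk hfU
    simp only [Pi.zero_apply, Pi.one_apply] at h0 h1
    have hS : 0 < α + ∑ i ∈ Finset.range j, (ω i).2 := SZm_pos hα ha hZω
    have hS' : α + ((j+1 : ℕ) : ℝ) * a ≤ SZm α (j+1) ω := SZm_ge hZω
    have hS'0 : 0 < SZm α (j+1) ω := lt_of_lt_of_le hden hS'
    -- per-k bound
    have hper : ∀ k ∈ Finset.range K,
        (predY P (j+1) (B k) ω - predY P j (B k) ω)^2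
        ≤ c^2 * (IndB j (B k) ω + predY P j (B k) ω) := by
      intro k _
      rw [hΔ k]
      have hZj : 0 < (ω j).2 := lt_of_lt_of_le ha (hZω j).1
      have hq : (ω j).2 / SZm α (j+1) ω ≤ c := by
        rw [hc]
        exact div_le_div₀ hb.le (hZω j).2 hden hS'
      have hq0 : 0 ≤ (ω j).2 / SZm α (j+1) ω := div_nonneg hZj.le hS'0.le
      have hsq : ((ω j).2 * (IndB j (B k) ω - predY P j (B k) ω) / SZm α (j+1) ω)^2
          = ((ω j).2 / SZm α (j+1) ω)^2 * (IndB j (B k) ω - predY P j (B k) ω)^2 := by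
        ring
      rw [hsq]
      have hIa : (IndB j (B k) ω - predY P j (B k) ω)^2
          ≤ IndB j (B k) ω + predY P j (B k) ω := by
        have hI0 : 0 ≤ IndB j (B k) ω := IndB_nonneg ω
        have hI1 : IndB j (B k) ω ≤ 1 := IndB_le_one ω
        nlinarith [h0 k, h1 k, mul_nonneg hI0 (h0 k),
          mul_nonneg (sub_nonneg.2 hI1) hI0, mul_nonneg (sub_nonneg.2 (h1 k)) (h0 k)]
      calc ((ω j).2 / SZm α (j+1) ω)^2 * (IndB j (B k) ω - predY P j (B k) ω)^2
          ≤ c^2 * (IndB j (B k) ω - predY P j (B k) ω)^2 := by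
            apply mul_le_mul_of_nonneg_right _ (sq_nonneg _)
            exact pow_le_pow_left₀ hq0 hq 2
        _ ≤ c^2 * (IndB j (B k) ω + predY P j (B k) ω) :=
            mul_le_mul_of_nonneg_left hIa (sq_nonneg c)
    -- sum of the predictive probabilities is dominated by that of the union
    have hsuma : ∑ k ∈ Finset.range K, predY P j (B k) ω ≤ predY P j (⋃ k, B k) ω := by
      have hNk : ∀ k, predY P j (B k) ω
          = (α * pSet P (B k) + ∑ i ∈ Finset.range j, (ω i).2 * IndB i (B k) ω)
            / (α + ∑ i ∈ Finset.range j, (ω i).2) := fun k => hfk k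
      have hNU : predY P j (⋃ k, B k) ω
          = (α * pSet P (⋃ k, B k) + ∑ i ∈ Finset.range j, (ω i).2 * IndB i (⋃ k, B k) ω)
            / (α + ∑ i ∈ Finset.range j, (ω i).2) := hfU
      rw [hNU]
      have : ∑ k ∈ Finset.range K, predY P j (B k) ω
          = (∑ k ∈ Finset.range K, (α * pSet P (B k)
              + ∑ i ∈ Finset.range j, (ω i).2 * IndB i (B k) ω))
            / (α + ∑ i ∈ Finset.range j, (ω i).2) := by
        rw [Finset.sum_div]
        exact Finset.sum_congr rfl fun k _ => hNk k
      rw [this]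
      refine div_le_div₀ ?_ ?_ hS le_rfl
      · have h1 : 0 ≤ α * pSet P (⋃ k, B k) := mul_nonneg hα.le ENNReal.toReal_nonneg
        have h2 : 0 ≤ ∑ i ∈ Finset.range j, (ω i).2 * IndB i (⋃ k, B k) ω :=
          Finset.sum_nonneg fun i _ =>
            mul_nonneg (le_trans ha.le (hZω i).1) (IndB_nonneg ω)
        linarith
      · rw [Finset.sum_add_distrib, ← Finset.mul_sum, Finset.sum_comm]
        refine add_le_add ?_ ?_
        · exact mul_le_mul_of_nonneg_left (sum_pSet_le hBk hdisj K) hα.le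
        · refine Finset.sum_le_sum fun i _ => ?_
          rw [← Finset.mul_sum]
          exact mul_le_mul_of_nonneg_left (sum_IndB_le hdisj i K ω)
            (le_trans ha.le (hZω i).1)
    calc ∑ k ∈ Finset.range K, (predY P (j+1) (B k) ω - predY P j (B k) ω)^2
        ≤ ∑ k ∈ Finset.range K, c^2 * (IndB j (B k) ω + predY P j (B k) ω) :=
          Finset.sum_le_sum hper
      _ = c^2 * (∑ k ∈ Finset.range K, IndB j (B k) ω
            + ∑ k ∈ Finset.range K, predY P j (B k) ω) := by
          rw [← Finset.mul_sum, Finset.sum_add_distrib]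
      _ ≤ c^2 * (IndB j (⋃ k, B k) ω + predY P j (⋃ k, B k) ω) :=
          mul_le_mul_of_nonneg_left (add_le_add (sum_IndB_le hdisj j K ω) hsuma)
            (sq_nonneg c)
  -- integrate
  have hLint : Integrable (fun ω => ∑ k ∈ Finset.range K,
      (predY P (j+1) (B k) ω - predY P j (B k) ω)^2) P := by
    refine integrable_finset_sum _ fun k _ => ?_
    refine integrable_of_bound ?_ 1 ?_
    · exact (((predY_meas (P := P) (j+1) (B k)).sub
        (predY_meas (P := P) j (B k))).pow_const 2).aestronglyMeasurable
    · filter_upwards [predY_nonneg (P := P) (j+1) (B k), predY_le_one (P := P) (j+1) (hBk k),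
        predY_nonneg (P := P) j (B k), predY_le_one (P := P) j (hBk k)] with ω u0 u1 v0 v1
      simp only [Pi.zero_apply, Pi.one_apply] at u0 u1 v0 v1
      have : |predY P (j+1) (B k) ω - predY P j (B k) ω| ≤ 1 := by
        rw [abs_le]; constructor <;> linarith
      calc |(predY P (j+1) (B k) ω - predY P j (B k) ω)^2|
          = |predY P (j+1) (B k) ω - predY P j (B k) ω|^2 := abs_pow _ 2
        _ ≤ 1 := by nlinarith [abs_nonneg (predY P (j+1) (B k) ω - predY P j (B k) ω)]
  have hRint : Integrable (fun ω =>
      c^2 * (IndB j (⋃ k, B k) ω + predY P j (⋃ k, B k) ω)) P :=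
    (((integrable_IndB hU).add (integrable_predY j _)).const_mul _)
  have hmono := integral_mono_ae hLint hRint hptwise
  have heval : ∫ ω, c^2 * (IndB j (⋃ k, B k) ω + predY P j (⋃ k, B k) ω) ∂P
      = c^2 * (∫ ω, IndB j (⋃ k, B k) ω ∂P + ∫ ω, predY P j (⋃ k, B k) ω ∂P) := by
    rw [MeasureTheory.integral_const_mul,
      integral_add (integrable_IndB hU) (integrable_predY j _)]
  rw [heval] at hmono
  have hq := integral_predY_le hα ha hb hZ hindep hpred hU j hj
  have hIq : ∫ ω, IndB j (⋃ k, B k) ω ∂P = ∫ ω, predY P j (⋃ k, B k) ω ∂P :=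
    integral_IndB_eq hU
  calc ∫ ω, ∑ k ∈ Finset.range K, (predY P (j+1) (B k) ω - predY P j (B k) ω)^2 ∂P
      ≤ c^2 * (∫ ω, IndB j (⋃ k, B k) ω ∂P + ∫ ω, predY P j (⋃ k, B k) ω ∂P) := hmono
    _ = c^2 * (2 * ∫ ω, predY P j (⋃ k, B k) ω ∂P) := by rw [hIq]; ring
    _ ≤ c^2 * (2 * ((α + b) / (α + a) * pSet P (⋃ k, B k))) := by
        refine mul_le_mul_of_nonneg_left ?_ (sq_nonneg c)
        linarith
    _ = c^2 * (2 * ((α + b) / (α + a)) * pSet P (⋃ k, B k)) := by ring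

end Aux7

section Aux8

variable {𝒴 : Type*} [MeasurableSpace 𝒴] {P : Measure (ℕ → 𝒴 × ℝ)} [IsProbabilityMeasure P]
variable {α a b : ℝ}
set_option linter.unusedSectionVars false

lemma abs_predY_sub_le {B : Set 𝒴} (hB : MeasurableSet B) (i j : ℕ) :
    ∀ᵐ ω ∂P, |predY P i B ω - predY P j B ω| ≤ 1 := by
  filter_upwards [predY_nonneg (P := P) i B, predY_le_one (P := P) i hB,
    predY_nonneg (P := P) j B, predY_le_one (P := P) j hB] with ω u0 u1 v0 v1
  simp only [Pi.zero_apply, Pi.one_apply] at u0 u1 v0 v1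
  rw [abs_le]; constructor <;> linarith

lemma integrable_predY_diff_mul {B : Set 𝒴} (hB : MeasurableSet B) (i j i' j' : ℕ) :
    Integrable (fun ω => (predY P i B ω - predY P j B ω)
      * (predY P i' B ω - predY P j' B ω)) P := by
  refine integrable_of_bound ?_ 1 ?_
  · exact (((predY_meas (P := P) i B).sub (predY_meas (P := P) j B)).mul
      ((predY_meas (P := P) i' B).sub (predY_meas (P := P) j' B))).aestronglyMeasurable
  · filter_upwards [abs_predY_sub_le (P := P) hB i j, abs_predY_sub_le (P := P) hB i' j']
      with ω h1 h2
    rw [abs_mul]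
    exact mul_le_one₀ h1 (abs_nonneg _) h2

lemma integrable_predY_diff_sq {B : Set 𝒴} (hB : MeasurableSet B) (i j : ℕ) :
    Integrable (fun ω => (predY P i B ω - predY P j B ω)^2) P := by
  have := integrable_predY_diff_mul (P := P) hB i j i j
  simpa [pow_two] using this

lemma integral_sq_expand (hα : 0 < α) (ha : 0 < a)
    (hZ : ∀ᵐ ω ∂P, ∀ n, (ω n).2 ∈ Set.Icc a b)
    (hindep : ∀ n : ℕ, Indep
      (MeasurableSpace.comap (fun ω : ℕ → 𝒴 × ℝ => (ω n).2) inferInstance)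
      (MeasurableSpace.comap
        (fun ω : ℕ → 𝒴 × ℝ => ((fun i : Fin n => ω i), (ω n).1)) inferInstance) P)
    (hpred : ∀ B : Set 𝒴, MeasurableSet B → ∀ n : ℕ, 1 ≤ n →
      predY P n B =ᵐ[P] fun ω =>
        (α * (P {ω' | (ω' 0).1 ∈ B}).toReal
          + ∑ i ∈ Finset.range n, (ω i).2 * B.indicator (fun _ => (1 : ℝ)) ((ω i).1))
        / (α + ∑ i ∈ Finset.range n, (ω i).2))
    {B : Set 𝒴} (hB : MeasurableSet B) {s : ℕ} (hs : 1 ≤ s) :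
    ∀ m, s ≤ m → ∫ ω, (predY P m B ω - predY P s B ω)^2 ∂P
      = ∑ j ∈ Finset.Ico s m, ∫ ω, (predY P (j+1) B ω - predY P j B ω)^2 ∂P := by
  intro m hm
  induction m, hm using Nat.le_induction with
  | base => simp
  | succ m hm ih =>
    rw [Finset.sum_Ico_succ_top hm, ← ih]
    have hAmeas : Measurable[cylG (𝒴 × ℝ) m] (fun ω => predY P m B ω - predY P s B ω) :=
      ((predY_sm (P := P) m B).measurable.sub
        ((predY_sm (P := P) s B).mono (cylG_mono _ hm)).measurable)
    have hzero : ∫ ω, (predY P m B ω - predY P s B ω)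
        * (predY P (m+1) B ω - predY P m B ω) ∂P = 0 :=
      integral_W_delta_zero hα ha hZ hindep hpred hB (le_trans hs hm) hAmeas 1
        (abs_predY_sub_le (P := P) hB m s)
    have h1 := integrable_predY_diff_sq (P := P) hB m s
    have h2 := integrable_predY_diff_mul (P := P) hB m s (m+1) m
    have h3 := integrable_predY_diff_sq (P := P) hB (m+1) m
    calc ∫ ω, (predY P (m+1) B ω - predY P s B ω)^2 ∂P
        = ∫ ω, ((predY P m B ω - predY P s B ω)^2
            + 2 * ((predY P m B ω - predY P s B ω)
                * (predY P (m+1) B ω - predY P m B ω)))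
            + (predY P (m+1) B ω - predY P m B ω)^2 ∂P :=
          integral_congr_ae (ae_of_all _ fun ω => by ring)
      _ = (∫ ω, (predY P m B ω - predY P s B ω)^2
            + 2 * ((predY P m B ω - predY P s B ω)
                * (predY P (m+1) B ω - predY P m B ω)) ∂P)
          + ∫ ω, (predY P (m+1) B ω - predY P m B ω)^2 ∂P :=
          integral_add (h1.add (h2.const_mul 2)) h3
      _ = ((∫ ω, (predY P m B ω - predY P s B ω)^2 ∂P)
            + ∫ ω, 2 * ((predY P m B ω - predY P s B ω)
                * (predY P (m+1) B ω - predY P m B ω)) ∂P)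
          + ∫ ω, (predY P (m+1) B ω - predY P m B ω)^2 ∂P := by
          rw [integral_add h1 (h2.const_mul 2)]
      _ = (∫ ω, (predY P m B ω - predY P s B ω)^2 ∂P)
          + ∫ ω, (predY P (m+1) B ω - predY P m B ω)^2 ∂P := by
          rw [MeasureTheory.integral_const_mul, hzero]
          ring

lemma sum_inv_mul_succ_le {s : ℕ} (hs : 1 ≤ s) :
    ∀ m, s ≤ m → ∑ j ∈ Finset.Ico s m, (1 / ((j:ℝ) * ((j:ℝ)+1))) ≤ 1 / (s:ℝ) := by
  have key : ∀ m, s ≤ m → ∑ j ∈ Finset.Ico s m, (1 / ((j:ℝ) * ((j:ℝ)+1)))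
      = 1 / (s:ℝ) - 1 / (m:ℝ) := by
    intro m hm
    induction m, hm using Nat.le_induction with
    | base => simp
    | succ m hm ih =>
      rw [Finset.sum_Ico_succ_top hm, ih]
      have hm0 : (0:ℝ) < (m:ℝ) := by
        have : 1 ≤ m := le_trans hs hm
        exact_mod_cast Nat.lt_of_lt_of_le Nat.zero_lt_one this
      have hm1 : (0:ℝ) < (m:ℝ) + 1 := by linarith
      push_cast
      field_simp
      ring
  intro m hm
  rw [key m hm]
  have hmnn : (0:ℝ) ≤ (m:ℝ) := Nat.cast_nonneg m
  have : 0 ≤ 1 / (m:ℝ) := by positivity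
  linarith

end Aux8

section Aux9

variable {𝒴 : Type*} [MeasurableSpace 𝒴] {P : Measure (ℕ → 𝒴 × ℝ)} [IsProbabilityMeasure P]
variable {α a b : ℝ}
set_option linter.unusedSectionVars false

lemma ae_sum_predY_le (hα : 0 < α) (ha : 0 < a)
    (hZ : ∀ᵐ ω ∂P, ∀ n, (ω n).2 ∈ Set.Icc a b)
    (hpred : ∀ B : Set 𝒴, MeasurableSet B → ∀ n : ℕ, 1 ≤ n →
      predY P n B =ᵐ[P] fun ω =>
        (α * (P {ω' | (ω' 0).1 ∈ B}).toReal
          + ∑ i ∈ Finset.range n, (ω i).2 * B.indicator (fun _ => (1 : ℝ)) ((ω i).1))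
        / (α + ∑ i ∈ Finset.range n, (ω i).2))
    {B : ℕ → Set 𝒴} (hBk : ∀ k, MeasurableSet (B k))
    (hdisj : Pairwise (Function.onFun Disjoint B))
    {j : ℕ} (hj : 1 ≤ j) :
    ∀ᵐ ω ∂P, ∀ K, ∑ k ∈ Finset.range K, predY P j (B k) ω ≤ predY P j (⋃ k, B k) ω := by
  have hU : MeasurableSet (⋃ k, B k) := MeasurableSet.iUnion hBk
  filter_upwards [hZ,
    ae_all_iff.2 (fun k : ℕ => hpred (B k) (hBk k) j hj),
    hpred (⋃ k, B k) hU j hj] with ω hZω hfk hfU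
  intro K
  have hS : 0 < α + ∑ i ∈ Finset.range j, (ω i).2 := SZm_pos hα ha hZω
  have hNU : predY P j (⋃ k, B k) ω
      = (α * pSet P (⋃ k, B k) + ∑ i ∈ Finset.range j, (ω i).2 * IndB i (⋃ k, B k) ω)
        / (α + ∑ i ∈ Finset.range j, (ω i).2) := hfU
  rw [hNU]
  have hrw : ∑ k ∈ Finset.range K, predY P j (B k) ω
      = (∑ k ∈ Finset.range K, (α * pSet P (B k)
          + ∑ i ∈ Finset.range j, (ω i).2 * IndB i (B k) ω))
        / (α + ∑ i ∈ Finset.range j, (ω i).2) := by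
    rw [Finset.sum_div]
    exact Finset.sum_congr rfl fun k _ => hfk k
  rw [hrw]
  refine div_le_div₀ ?_ ?_ hS le_rfl
  · have h1 : 0 ≤ α * pSet P (⋃ k, B k) := mul_nonneg hα.le ENNReal.toReal_nonneg
    have h2 : 0 ≤ ∑ i ∈ Finset.range j, (ω i).2 * IndB i (⋃ k, B k) ω :=
      Finset.sum_nonneg fun i _ =>
        mul_nonneg (le_trans ha.le (hZω i).1) (IndB_nonneg ω)
    linarith
  · rw [Finset.sum_add_distrib, ← Finset.mul_sum, Finset.sum_comm]
    refine add_le_add ?_ ?_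
    · exact mul_le_mul_of_nonneg_left (sum_pSet_le hBk hdisj K) hα.le
    · refine Finset.sum_le_sum fun i _ => ?_
      rw [← Finset.mul_sum]
      exact mul_le_mul_of_nonneg_left (sum_IndB_le hdisj i K ω)
        (le_trans ha.le (hZω i).1)

end Aux9

/-- In the generalized Pólya urn setting with bounded weights `a ≤ Z₁ ≤ b`, for
pairwise disjoint `B₁, B₂, …`: `E(‖a_{n+1} − μ‖²) ≤ (c₁/n) P(Y₁ ∈ ⋃_k B_k)`. -/
theorem stmt15 {𝒴 : Type*} [MeasurableSpace 𝒴] (P : Measure (ℕ → 𝒴 × ℝ))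
    [IsProbabilityMeasure P] (α a b : ℝ) (hα : 0 < α) (hab : 0 < a ∧ a < b)
    (hZ : ∀ᵐ ω ∂P, ∀ n, (ω n).2 ∈ Set.Icc a b)
    (hindep : ∀ n : ℕ, ProbabilityTheory.Indep
      (MeasurableSpace.comap (fun ω => (ω n).2) inferInstance)
      (MeasurableSpace.comap
        (fun ω => ((fun i : Fin n => ω i), (ω n).1)) inferInstance) P)
    (hid : ∀ n : ℕ, P.map (fun ω => (ω n).2) = P.map (fun ω => (ω 0).2))
    (hpred : ∀ B : Set 𝒴, MeasurableSet B → ∀ n : ℕ, 1 ≤ n →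
      predY P n B =ᵐ[P] fun ω =>
        (α * (P {ω' | (ω' 0).1 ∈ B}).toReal
          + ∑ i ∈ Finset.range n, (ω i).2 * B.indicator (fun _ => (1 : ℝ)) ((ω i).1))
        / (α + ∑ i ∈ Finset.range n, (ω i).2))
    (μlimY : Set 𝒴 → (ℕ → 𝒴 × ℝ) → ℝ)
    (hmeas : ∀ B : Set 𝒴, MeasurableSet B → Measurable (μlimY B))
    (hlim : ∀ B : Set 𝒴, MeasurableSet B →
      ∀ᵐ ω ∂P, Tendsto (fun n => predY P n B ω) atTop (nhds (μlimY B ω))) :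
    ∃ c1 : ℝ, 0 < c1 ∧ ∀ B : ℕ → Set 𝒴, (∀ k, MeasurableSet (B k)) →
      Pairwise (Function.onFun Disjoint B) → ∀ n : ℕ, 1 ≤ n →
        ∫ ω, (⨆ k : ℕ, |predY P (n + 1) (B k) ω - μlimY (B k) ω|) ^ 2 ∂P
          ≤ c1 / n * (P {ω | (ω 0).1 ∈ ⋃ k, B k}).toReal := by
  obtain ⟨ha, hab'⟩ := hab
  have hb : 0 < b := ha.trans hab'
  refine ⟨2 * b^2 * (α + b) / (a^2 * (α + a)), by positivity, ?_⟩
  intro B hBk hdisj n hn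
  have hU : MeasurableSet (⋃ k, B k) := MeasurableSet.iUnion hBk
  have hs1 : 1 ≤ n + 1 := by omega
  have hn0 : (0:ℝ) < n := by exact_mod_cast hn
  set p : ℝ := (P {ω | (ω 0).1 ∈ ⋃ k, B k}).toReal with hp
  have hp0 : 0 ≤ p := ENNReal.toReal_nonneg
  set c1 : ℝ := 2 * b^2 * (α + b) / (a^2 * (α + a)) with hc1
  set Cq : ℝ := (α + b) / (α + a) with hCq
  have hCq0 : (0:ℝ) ≤ Cq := by rw [hCq]; positivity
  have hfac0 : (0:ℝ) ≤ b^2/a^2 * (2 * Cq * p) :=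
    mul_nonneg (by positivity) (mul_nonneg (mul_nonneg (by norm_num) hCq0) hp0)
  -- Step 1 : finite-horizon bound
  have step1 : ∀ K m, n + 1 ≤ m →
      ∫ ω, ∑ k ∈ Finset.range K,
        (predY P m (B k) ω - predY P (n+1) (B k) ω)^2 ∂P ≤ c1 / n * p := by
    intro K m hm
    rw [integral_finset_sum _ (fun k _ => integrable_predY_diff_sq (P := P) (hBk k) m (n+1))]
    calc ∑ k ∈ Finset.range K, ∫ ω, (predY P m (B k) ω - predY P (n+1) (B k) ω)^2 ∂P
        = ∑ k ∈ Finset.range K, ∑ j ∈ Finset.Ico (n+1) m,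
            ∫ ω, (predY P (j+1) (B k) ω - predY P j (B k) ω)^2 ∂P :=
          Finset.sum_congr rfl fun k _ =>
            integral_sq_expand hα ha hZ hindep hpred (hBk k) hs1 m hm
      _ = ∑ j ∈ Finset.Ico (n+1) m, ∑ k ∈ Finset.range K,
            ∫ ω, (predY P (j+1) (B k) ω - predY P j (B k) ω)^2 ∂P := Finset.sum_comm
      _ = ∑ j ∈ Finset.Ico (n+1) m, ∫ ω, ∑ k ∈ Finset.range K,
            (predY P (j+1) (B k) ω - predY P j (B k) ω)^2 ∂P :=
          Finset.sum_congr rfl fun j _ =>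
            (integral_finset_sum _ fun k _ =>
              integrable_predY_diff_sq (P := P) (hBk k) (j+1) j).symm
      _ ≤ ∑ j ∈ Finset.Ico (n+1) m, (b / (α + ((j+1 : ℕ) : ℝ) * a))^2 * (2 * Cq * p) := by
          refine Finset.sum_le_sum fun j hj => ?_
          have hj1 : 1 ≤ j := by have := (Finset.mem_Ico.mp hj).1; omega
          exact integral_sum_delta_sq_le hα ha hb hZ hindep hpred hBk hdisj hj1 K
      _ ≤ ∑ j ∈ Finset.Ico (n+1) m,
            (b^2/a^2 * (2 * Cq * p)) * (1/((j:ℝ)*((j:ℝ)+1))) := by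
          refine Finset.sum_le_sum fun j hj => ?_
          have hj1 : 1 ≤ j := by have := (Finset.mem_Ico.mp hj).1; omega
          have hj1R : (1:ℝ) ≤ (j:ℝ) := by exact_mod_cast hj1
          have hd1 : (0:ℝ) < (j:ℝ) * ((j:ℝ)+1) := by nlinarith
          have hd2 : (0:ℝ) < α + ((j+1 : ℕ) : ℝ) * a := by push_cast; nlinarith
          have hkey : (b / (α + ((j+1 : ℕ) : ℝ) * a))^2
              ≤ b^2/a^2 * (1/((j:ℝ)*((j:ℝ)+1))) := by
            have hrw : b^2/a^2 * (1/((j:ℝ)*((j:ℝ)+1)))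
                = b^2 / (a^2 * ((j:ℝ)*((j:ℝ)+1))) := by
              field_simp
            rw [div_pow, hrw]
            refine div_le_div₀ (by positivity) le_rfl (by positivity) ?_
            push_cast
            nlinarith [sq_nonneg α,
              mul_nonneg (mul_nonneg hα.le (by linarith : (0:ℝ) ≤ (j:ℝ)+1)) ha.le,
              mul_nonneg (mul_nonneg ha.le ha.le) (by linarith : (0:ℝ) ≤ (j:ℝ)+1)]
          calc (b / (α + ((j+1 : ℕ) : ℝ) * a))^2 * (2 * Cq * p)
              ≤ (b^2/a^2 * (1/((j:ℝ)*((j:ℝ)+1)))) * (2 * Cq * p) :=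
                mul_le_mul_of_nonneg_right hkey
                  (mul_nonneg (mul_nonneg (by norm_num) hCq0) hp0)
            _ = (b^2/a^2 * (2 * Cq * p)) * (1/((j:ℝ)*((j:ℝ)+1))) := by ring
      _ = (b^2/a^2 * (2 * Cq * p)) * ∑ j ∈ Finset.Ico (n+1) m, (1/((j:ℝ)*((j:ℝ)+1))) := by
          rw [Finset.mul_sum]
      _ ≤ (b^2/a^2 * (2 * Cq * p)) * (1/((n+1 : ℕ) : ℝ)) :=
          mul_le_mul_of_nonneg_left (sum_inv_mul_succ_le hs1 m hm) hfac0
      _ ≤ c1 / n * p := by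
          have h1 : (1:ℝ)/((n+1 : ℕ) : ℝ) ≤ 1/(n:ℝ) := by
            push_cast
            refine one_div_le_one_div_of_le hn0 (by linarith)
          calc (b^2/a^2 * (2 * Cq * p)) * (1/((n+1 : ℕ) : ℝ))
              ≤ (b^2/a^2 * (2 * Cq * p)) * (1/(n:ℝ)) :=
                mul_le_mul_of_nonneg_left h1 hfac0
            _ = c1 / n * p := by
                rw [hc1, hCq]
                have h2 : (a:ℝ) ≠ 0 := ne_of_gt ha
                have h3 : (α + a) ≠ 0 := by positivity
                have h4 : (n:ℝ) ≠ 0 := ne_of_gt hn0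
                field_simp
  -- Step 2 : pass to the limit in m
  have step2 : ∀ K : ℕ, ∫ ω, ∑ k ∈ Finset.range K,
      (predY P (n+1) (B k) ω - μlimY (B k) ω)^2 ∂P ≤ c1 / n * p := by
    intro K
    have hFmeas : ∀ m : ℕ, AEStronglyMeasurable (fun ω => ∑ k ∈ Finset.range K,
        (predY P m (B k) ω - predY P (n+1) (B k) ω)^2) P := fun m =>
      (Finset.measurable_sum _ fun k _ => ((predY_meas (P := P) m (B k)).sub
        (predY_meas (P := P) (n+1) (B k))).pow_const 2).aestronglyMeasurable
    have h_bound : ∀ m : ℕ, ∀ᵐ ω ∂P, ‖∑ k ∈ Finset.range K,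
        (predY P m (B k) ω - predY P (n+1) (B k) ω)^2‖ ≤ (K:ℝ) := by
      intro m
      filter_upwards [ae_all_iff.2 fun k : ℕ =>
        abs_predY_sub_le (P := P) (hBk k) m (n+1)] with ω hω
      rw [Real.norm_eq_abs, abs_of_nonneg (Finset.sum_nonneg fun k _ => sq_nonneg _)]
      calc ∑ k ∈ Finset.range K, (predY P m (B k) ω - predY P (n+1) (B k) ω)^2
          ≤ ∑ _k ∈ Finset.range K, (1:ℝ) := by
            refine Finset.sum_le_sum fun k _ => ?_
            have h1 := hω k
            have h2 : (predY P m (B k) ω - predY P (n+1) (B k) ω)^2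
                = |predY P m (B k) ω - predY P (n+1) (B k) ω|^2 := (sq_abs _).symm
            rw [h2]
            nlinarith [abs_nonneg (predY P m (B k) ω - predY P (n+1) (B k) ω)]
        _ = (K:ℝ) := by simp
    have h_lim : ∀ᵐ ω ∂P, Tendsto (fun m => ∑ k ∈ Finset.range K,
        (predY P m (B k) ω - predY P (n+1) (B k) ω)^2) atTop
        (𝓝 (∑ k ∈ Finset.range K, (predY P (n+1) (B k) ω - μlimY (B k) ω)^2)) := by
      filter_upwards [ae_all_iff.2 fun k : ℕ => hlim (B k) (hBk k)] with ω hω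
      have hre : ∑ k ∈ Finset.range K, (predY P (n+1) (B k) ω - μlimY (B k) ω)^2
          = ∑ k ∈ Finset.range K, (μlimY (B k) ω - predY P (n+1) (B k) ω)^2 :=
        Finset.sum_congr rfl fun k _ => by ring
      rw [hre]
      exact tendsto_finset_sum _ fun k _ =>
        Tendsto.pow ((hω k).sub tendsto_const_nhds) 2
    have hDCT := tendsto_integral_of_dominated_convergence _ hFmeas
      (integrable_const (K:ℝ)) h_bound h_lim
    exact le_of_tendsto hDCT (Filter.eventually_atTop.2 ⟨n+1, fun m hm => step1 K m hm⟩)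
  -- uniform a.e. bound for sums
  have haeA : ∀ᵐ ω ∂P, ∀ m k : ℕ, 0 ≤ predY P m (B k) ω ∧ predY P m (B k) ω ≤ 1 :=
    ae_all_iff.2 fun m => ae_all_iff.2 fun k => by
      filter_upwards [predY_nonneg (P := P) m (B k), predY_le_one (P := P) m (hBk k)]
        with ω h1 h2
      simp only [Pi.zero_apply, Pi.one_apply] at h1 h2
      exact ⟨h1, h2⟩
  have haeSum : ∀ᵐ ω ∂P, ∀ m K : ℕ, ∑ k ∈ Finset.range K, predY P (m+1) (B k) ω
      ≤ predY P (m+1) (⋃ k, B k) ω :=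
    ae_all_iff.2 fun m => ae_sum_predY_le hα ha hZ hpred hBk hdisj (Nat.le_add_left 1 m)
  have haeU1 : ∀ᵐ ω ∂P, ∀ m : ℕ, predY P m (⋃ k, B k) ω ≤ 1 :=
    ae_all_iff.2 fun m => by
      filter_upwards [predY_le_one (P := P) m hU] with ω h
      simpa using h
  have haeLim : ∀ᵐ ω ∂P, ∀ k : ℕ,
      Tendsto (fun m => predY P m (B k) ω) atTop (𝓝 (μlimY (B k) ω)) :=
    ae_all_iff.2 fun k => hlim (B k) (hBk k)
  have hsum4 : ∀ᵐ ω ∂P, ∀ K : ℕ, ∑ k ∈ Finset.range K,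
      (predY P (n+1) (B k) ω - μlimY (B k) ω)^2 ≤ 4 := by
    filter_upwards [haeA, haeSum, haeU1, haeLim] with ω hA hSum hU1 hLim
    intro K
    have hμ0 : ∀ k, 0 ≤ μlimY (B k) ω := fun k =>
      ge_of_tendsto (hLim k) (Filter.Eventually.of_forall fun m => (hA m k).1)
    have hμ1 : ∀ k, μlimY (B k) ω ≤ 1 := fun k =>
      le_of_tendsto (hLim k) (Filter.Eventually.of_forall fun m => (hA m k).2)
    have hμsum : ∑ k ∈ Finset.range K, μlimY (B k) ω ≤ 1 := by
      have ht : Tendsto (fun m => ∑ k ∈ Finset.range K, predY P m (B k) ω) atTop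
          (𝓝 (∑ k ∈ Finset.range K, μlimY (B k) ω)) :=
        tendsto_finset_sum _ fun k _ => hLim k
      refine le_of_tendsto ht ?_
      refine Filter.eventually_atTop.2 ⟨1, fun m hm => ?_⟩
      obtain ⟨m', rfl⟩ : ∃ m', m = m' + 1 := ⟨m - 1, by omega⟩
      exact le_trans (hSum m' K) (hU1 (m'+1))
    have hasum : ∑ k ∈ Finset.range K, predY P (n+1) (B k) ω ≤ 1 :=
      le_trans (hSum n K) (hU1 (n+1))
    calc ∑ k ∈ Finset.range K, (predY P (n+1) (B k) ω - μlimY (B k) ω)^2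
        ≤ ∑ k ∈ Finset.range K, (predY P (n+1) (B k) ω + μlimY (B k) ω) := by
          refine Finset.sum_le_sum fun k _ => ?_
          have h1 := hA (n+1) k
          have h2 := hμ0 k
          have h3 := hμ1 k
          nlinarith [mul_nonneg h1.1 h2, mul_nonneg (sub_nonneg.2 h1.2) h1.1,
            mul_nonneg (sub_nonneg.2 h3) h2]
      _ = (∑ k ∈ Finset.range K, predY P (n+1) (B k) ω)
          + ∑ k ∈ Finset.range K, μlimY (B k) ω := Finset.sum_add_distrib
      _ ≤ 1 + 1 := add_le_add hasum hμsum
      _ ≤ 4 := by norm_num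
  -- Step 3 : supremum over k
  have hdmeas : ∀ k : ℕ, Measurable (fun ω => predY P (n+1) (B k) ω - μlimY (B k) ω) :=
    fun k => (predY_meas (P := P) (n+1) (B k)).sub (hmeas (B k) (hBk k))
  have hgmeas : ∀ K : ℕ, Measurable (fun ω => ∑ k ∈ Finset.range K,
      (predY P (n+1) (B k) ω - μlimY (B k) ω)^2) := fun K =>
    Finset.measurable_sum _ fun k _ => (hdmeas k).pow_const 2
  have hGmeas : Measurable (fun ω => ⨆ K : ℕ, ∑ k ∈ Finset.range K,
      (predY P (n+1) (B k) ω - μlimY (B k) ω)^2) := Measurable.iSup hgmeas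
  have hkey : ∀ᵐ ω ∂P,
      (⨆ k : ℕ, |predY P (n + 1) (B k) ω - μlimY (B k) ω|)^2
        ≤ (⨆ K : ℕ, ∑ k ∈ Finset.range K, (predY P (n+1) (B k) ω - μlimY (B k) ω)^2)
      ∧ (⨆ K : ℕ, ∑ k ∈ Finset.range K, (predY P (n+1) (B k) ω - μlimY (B k) ω)^2) ≤ 4
      ∧ 0 ≤ (⨆ K : ℕ, ∑ k ∈ Finset.range K, (predY P (n+1) (B k) ω - μlimY (B k) ω)^2)
      ∧ Tendsto (fun K => ∑ k ∈ Finset.range K,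
          (predY P (n+1) (B k) ω - μlimY (B k) ω)^2) atTop
          (𝓝 (⨆ K : ℕ, ∑ k ∈ Finset.range K,
            (predY P (n+1) (B k) ω - μlimY (B k) ω)^2)) := by
    filter_upwards [hsum4] with ω h4
    have hmono : Monotone (fun K => ∑ k ∈ Finset.range K,
        (predY P (n+1) (B k) ω - μlimY (B k) ω)^2) := fun K1 K2 h =>
      Finset.sum_le_sum_of_subset_of_nonneg (Finset.range_subset_range.2 h)
        (fun k _ _ => sq_nonneg _)
    have hbdd : BddAbove (Set.range (fun K => ∑ k ∈ Finset.range K,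
        (predY P (n+1) (B k) ω - μlimY (B k) ω)^2)) := by
      refine ⟨4, ?_⟩
      rintro x ⟨K, rfl⟩
      exact h4 K
    have hG0 : 0 ≤ ⨆ K : ℕ, ∑ k ∈ Finset.range K,
        (predY P (n+1) (B k) ω - μlimY (B k) ω)^2 := by
      have := le_ciSup hbdd 0
      simpa using this
    have hterm : ∀ k : ℕ, (predY P (n+1) (B k) ω - μlimY (B k) ω)^2
        ≤ ⨆ K : ℕ, ∑ k ∈ Finset.range K,
          (predY P (n+1) (B k) ω - μlimY (B k) ω)^2 := fun k =>
      le_trans (Finset.single_le_sum (fun i _ => sq_nonneg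
          (predY P (n+1) (B i) ω - μlimY (B i) ω)) (Finset.self_mem_range_succ k))
        (le_ciSup hbdd (k+1))
    have habs : ∀ k : ℕ, |predY P (n+1) (B k) ω - μlimY (B k) ω|
        ≤ Real.sqrt (⨆ K : ℕ, ∑ k ∈ Finset.range K,
          (predY P (n+1) (B k) ω - μlimY (B k) ω)^2) := fun k => by
      rw [← Real.sqrt_sq_eq_abs]
      exact Real.sqrt_le_sqrt (hterm k)
    have hsup : (⨆ k : ℕ, |predY P (n+1) (B k) ω - μlimY (B k) ω|)
        ≤ Real.sqrt (⨆ K : ℕ, ∑ k ∈ Finset.range K,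
          (predY P (n+1) (B k) ω - μlimY (B k) ω)^2) := ciSup_le habs
    have hsupnn : 0 ≤ ⨆ k : ℕ, |predY P (n+1) (B k) ω - μlimY (B k) ω| := by
      refine le_ciSup_of_le ?_ 0 (abs_nonneg _)
      refine ⟨Real.sqrt (⨆ K : ℕ, ∑ k ∈ Finset.range K,
        (predY P (n+1) (B k) ω - μlimY (B k) ω)^2), ?_⟩
      rintro x ⟨k, rfl⟩
      exact habs k
    refine ⟨?_, ciSup_le h4, hG0, tendsto_atTop_ciSup hmono hbdd⟩
    calc (⨆ k : ℕ, |predY P (n + 1) (B k) ω - μlimY (B k) ω|)^2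
        ≤ (Real.sqrt (⨆ K : ℕ, ∑ k ∈ Finset.range K,
            (predY P (n+1) (B k) ω - μlimY (B k) ω)^2))^2 :=
          pow_le_pow_left₀ hsupnn hsup 2
      _ = _ := Real.sq_sqrt hG0
  have h_bound2 : ∀ K : ℕ, ∀ᵐ ω ∂P, ‖∑ k ∈ Finset.range K,
      (predY P (n+1) (B k) ω - μlimY (B k) ω)^2‖ ≤ (4:ℝ) := by
    intro K
    filter_upwards [hsum4] with ω h4
    rw [Real.norm_eq_abs, abs_of_nonneg (Finset.sum_nonneg fun k _ => sq_nonneg _)]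
    exact h4 K
  have hDCT2 := tendsto_integral_of_dominated_convergence (fun _ => (4:ℝ))
    (fun K => (hgmeas K).aestronglyMeasurable) (integrable_const (4:ℝ)) h_bound2
    ((hkey.mono fun ω h => h.2.2.2))
  have hGle : ∫ ω, (⨆ K : ℕ, ∑ k ∈ Finset.range K,
      (predY P (n+1) (B k) ω - μlimY (B k) ω)^2) ∂P ≤ c1 / n * p :=
    le_of_tendsto hDCT2 (Filter.Eventually.of_forall step2)
  have hGint : Integrable (fun ω => ⨆ K : ℕ, ∑ k ∈ Finset.range K,
      (predY P (n+1) (B k) ω - μlimY (B k) ω)^2) P := by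
    refine integrable_of_bound hGmeas.aestronglyMeasurable 4 ?_
    filter_upwards [hkey] with ω h
    rw [abs_of_nonneg h.2.2.1]
    exact h.2.1
  have hSSmeas : Measurable (fun ω =>
      (⨆ k : ℕ, |predY P (n + 1) (B k) ω - μlimY (B k) ω|) ^ 2) :=
    (Measurable.iSup fun k => (hdmeas k).abs).pow_const 2
  have hSSint : Integrable (fun ω =>
      (⨆ k : ℕ, |predY P (n + 1) (B k) ω - μlimY (B k) ω|) ^ 2) P := by
    refine integrable_of_bound hSSmeas.aestronglyMeasurable 4 ?_
    filter_upwards [hkey] with ω h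
    rw [abs_of_nonneg (sq_nonneg _)]
    exact le_trans h.1 h.2.1
  calc ∫ ω, (⨆ k : ℕ, |predY P (n + 1) (B k) ω - μlimY (B k) ω|) ^ 2 ∂P
      ≤ ∫ ω, (⨆ K : ℕ, ∑ k ∈ Finset.range K,
          (predY P (n+1) (B k) ω - μlimY (B k) ω)^2) ∂P :=
        integral_mono_ae hSSint hGint (hkey.mono fun ω h => h.1)
    _ ≤ c1 / n * p := hGle
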